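/- For every constructive formula A whose atoms are among p_1, …, p_k and every tuple of formulas φ_1, …, φ_k, there exists a finite multiset Υ of modal Horn formulas all of whose atoms are angled atoms such that CK proves Υ, ⟨A(φ̄)⟩, A(φ̄^t) ⇒ (A(φ̄))^t, and CK proves (⇒ ⋀Υ^s), where s is the standard substitution. -/

import Mathlib

set_option autoImplicit false

namespace UPT

/-- Modal formulas over atoms of type `α` (the language `ℒ = {∧,∨,→,⊤,⊥,□,◇}`). -/
inductive Fml (α : Type) : Type where
  | atom : α → Fml α
  | top  : Fml α
  | bot  : Fml α
  | and  : Fml α → Fml α → Fml α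
  | or   : Fml α → Fml α → Fml α
  | imp  : Fml α → Fml α → Fml α
  | box  : Fml α → Fml α
  | dia  : Fml α → Fml α
deriving DecidableEq

variable {α β : Type}

/-- Simultaneous substitution of formulas for atoms. -/
def Fml.subst (σ : β → Fml α) : Fml β → Fml α
  | .atom b  => σ b
  | .top     => .top
  | .bot     => .bot
  | .and A B => .and (A.subst σ) (B.subst σ)
  | .or A B  => .or (A.subst σ) (B.subst σ)
  | .imp A B => .imp (A.subst σ) (B.subst σ)
  | .box A   => .box (A.subst σ)
  | .dia A   => .dia (A.subst σ)

/-- A sequent: a finite multiset antecedent together with a succedent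
containing at most one formula. -/
abbrev Seq (α : Type) : Type := Multiset (Fml α) × Option (Fml α)

/-- A rule set relates a (finite) list of premise sequents to a conclusion sequent. -/
abbrev RuleSet (α : Type) : Type := List (Seq α) → Seq α → Prop

/-- The axioms and rules of the single-conclusion sequent calculus `LJ`, stated
schematically: they are closed under substituting arbitrary formulas for atoms
and arbitrary multisets (resp. succedents) for the context variables. -/
inductive LJRule : List (Seq α) → Seq α → Prop where
  | id (Γ : Multiset (Fml α)) (A : Fml α) : LJRule [] (A ::ₘ Γ, some A)
  | botL (Γ : Multiset (Fml α)) (Δ : Option (Fml α)) : LJRule [] (.bot ::ₘ Γ, Δ)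
  | topR (Γ : Multiset (Fml α)) : LJRule [] (Γ, some .top)
  | wL (A : Fml α) (Γ : Multiset (Fml α)) (Δ : Option (Fml α)) :
      LJRule [(Γ, Δ)] (A ::ₘ Γ, Δ)
  | wR (A : Fml α) (Γ : Multiset (Fml α)) : LJRule [(Γ, none)] (Γ, some A)
  | cL (A : Fml α) (Γ : Multiset (Fml α)) (Δ : Option (Fml α)) :
      LJRule [(A ::ₘ A ::ₘ Γ, Δ)] (A ::ₘ Γ, Δ)
  | cut (A : Fml α) (Γ : Multiset (Fml α)) (Δ : Option (Fml α)) :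
      LJRule [(Γ, some A), (A ::ₘ Γ, Δ)] (Γ, Δ)
  | andL₁ (A B : Fml α) (Γ : Multiset (Fml α)) (Δ : Option (Fml α)) :
      LJRule [(A ::ₘ Γ, Δ)] (.and A B ::ₘ Γ, Δ)
  | andL₂ (A B : Fml α) (Γ : Multiset (Fml α)) (Δ : Option (Fml α)) :
      LJRule [(B ::ₘ Γ, Δ)] (.and A B ::ₘ Γ, Δ)
  | andR (A B : Fml α) (Γ : Multiset (Fml α)) :
      LJRule [(Γ, some A), (Γ, some B)] (Γ, some (.and A B))
  | orL (A B : Fml α) (Γ : Multiset (Fml α)) (Δ : Option (Fml α)) :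
      LJRule [(A ::ₘ Γ, Δ), (B ::ₘ Γ, Δ)] (.or A B ::ₘ Γ, Δ)
  | orR₁ (A B : Fml α) (Γ : Multiset (Fml α)) : LJRule [(Γ, some A)] (Γ, some (.or A B))
  | orR₂ (A B : Fml α) (Γ : Multiset (Fml α)) : LJRule [(Γ, some B)] (Γ, some (.or A B))
  | impL (A B : Fml α) (Γ : Multiset (Fml α)) (Δ : Option (Fml α)) :
      LJRule [(Γ, some A), (B ::ₘ Γ, Δ)] (.imp A B ::ₘ Γ, Δ)
  | impR (A B : Fml α) (Γ : Multiset (Fml α)) :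
      LJRule [(A ::ₘ Γ, some B)] (Γ, some (.imp A B))

/-- The rule `K_□`: from `Γ ⇒ A` infer `□Γ ⇒ □A`. -/
inductive KBoxRule : List (Seq α) → Seq α → Prop where
  | mk (Γ : Multiset (Fml α)) (A : Fml α) :
      KBoxRule [(Γ, some A)] (Γ.map Fml.box, some (.box A))

/-- The rule `K_◇`: from `Γ, A ⇒ B` infer `□Γ, ◇A ⇒ ◇B`. -/
inductive KDiaRule : List (Seq α) → Seq α → Prop where
  | mk (Γ : Multiset (Fml α)) (A B : Fml α) :
      KDiaRule [(A ::ₘ Γ, some B)] (.dia A ::ₘ Γ.map Fml.box, some (.dia B))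

/-- The rule `◇L`: from `Γ, A ⇒ B` infer `Γ, ◇A ⇒ ◇B`. -/
inductive DiaLRule : List (Seq α) → Seq α → Prop where
  | mk (Γ : Multiset (Fml α)) (A B : Fml α) :
      DiaLRule [(A ::ₘ Γ, some B)] (.dia A ::ₘ Γ, some (.dia B))

/-- Adding a set `Ax` of axioms to a calculus: the initial sequents `⇒ σ(A)`
for every substitution instance `σ(A)` of every `A ∈ Ax`. -/
def axRule (Ax : Fml α → Prop) : RuleSet α := fun ps c =>
  ps = [] ∧ ∃ (A : Fml α) (σ : α → Fml α), Ax A ∧ c = ((0 : Multiset (Fml α)), some (A.subst σ))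

/-- Using a set of sequents as additional initial sequents (assumptions). -/
def hypRule (H : Set (Seq α)) : RuleSet α := fun ps c => ps = [] ∧ c ∈ H

/-- The sequent calculus `LJ+Ax`. -/
def LJSys (Ax : Fml α → Prop) : RuleSet α := fun ps c => LJRule ps c ∨ axRule Ax ps c

/-- The sequent calculus `CK+Ax = LJ + K_□ + K_◇ + Ax`. -/
def CKSys (Ax : Fml α → Prop) : RuleSet α := fun ps c =>
  LJRule ps c ∨ KBoxRule ps c ∨ KDiaRule ps c ∨ axRule Ax ps c

/-- The sequent calculus `CK_□+Ax = LJ + K_□ + Ax`. -/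
def CKBoxSys (Ax : Fml α → Prop) : RuleSet α := fun ps c =>
  LJRule ps c ∨ KBoxRule ps c ∨ axRule Ax ps c

/-- The sequent calculus `BLL+Ax = LJ + ◇L + Ax`. -/
def BLLSys (Ax : Fml α → Prop) : RuleSet α := fun ps c =>
  LJRule ps c ∨ DiaLRule ps c ∨ axRule Ax ps c

/-- Provability of a sequent in the calculus generated by a rule set. -/
inductive Derives (R : RuleSet α) : Multiset (Fml α) → Option (Fml α) → Prop where
  | step {ps : List (Seq α)} {c : Seq α} (hr : R ps c)
      (hp : ∀ p ∈ ps, Derives R p.1 p.2) : Derives R c.1 c.2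

/-- Basic formulas: generated from atoms, `⊤`, `⊥` by `∧`, `∨`, `◇`. -/
inductive Basic : Fml α → Prop where
  | atom (a : α) : Basic (.atom a)
  | top : Basic (.top : Fml α)
  | bot : Basic (.bot : Fml α)
  | and {A B : Fml α} : Basic A → Basic B → Basic (.and A B)
  | or {A B : Fml α} : Basic A → Basic B → Basic (.or A B)
  | dia {A : Fml α} : Basic A → Basic (.dia A)

/-- Almost positive formulas: generated from basic formulas by `∧`, `∨`, `□`, `◇`
and implications `A → B` with `A` basic and `B` almost positive. -/
inductive AlmostPos : Fml α → Prop where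
  | basic {A : Fml α} : Basic A → AlmostPos A
  | and {A B : Fml α} : AlmostPos A → AlmostPos B → AlmostPos (.and A B)
  | or {A B : Fml α} : AlmostPos A → AlmostPos B → AlmostPos (.or A B)
  | box {A : Fml α} : AlmostPos A → AlmostPos (.box A)
  | dia {A : Fml α} : AlmostPos A → AlmostPos (.dia A)
  | imp {A B : Fml α} : Basic A → AlmostPos B → AlmostPos (.imp A B)

/-- Constructive formulas: generated from basic formulas by `∧`, `□` and
implications `A → B` with `A` almost positive and `B` constructive. -/
inductive Constructive : Fml α → Prop where
  | basic {A : Fml α} : Basic A → Constructive A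
  | and {A B : Fml α} : Constructive A → Constructive B → Constructive (.and A B)
  | box {A : Fml α} : Constructive A → Constructive (.box A)
  | imp {A B : Fml α} : AlmostPos A → Constructive B → Constructive (.imp A B)

/-- Harrop formulas: atoms, `⊥`, `⊤`, closed under `∧`, `□`, and implications
`A → B` with `A` arbitrary and `B` Harrop. -/
inductive Harrop : Fml α → Prop where
  | atom (a : α) : Harrop (.atom a)
  | top : Harrop (.top : Fml α)
  | bot : Harrop (.bot : Fml α)
  | and {A B : Fml α} : Harrop A → Harrop B → Harrop (.and A B)
  | box {A : Fml α} : Harrop A → Harrop (.box A)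
  | imp (A : Fml α) {B : Fml α} : Harrop B → Harrop (.imp A B)

/-- Conjunction of a list of formulas (`⋀∅ = ⊤`). -/
def conj : List (Fml α) → Fml α
  | [] => .top
  | [A] => A
  | A :: B :: l => .and A (conj (B :: l))

/-- Disjunction of a list of formulas (`⋁∅ = ⊥`). -/
def disj : List (Fml α) → Fml α
  | [] => .bot
  | [A] => A
  | A :: B :: l => .or A (disj (B :: l))

/-- Disjunction of a succedent (at most one formula; `⋁∅ = ⊥`). -/
def odisj : Option (Fml α) → Fml α
  | none => .bot
  | some A => A

/-- The multiset `{A_i → B_i}_{i ∈ I}` of implications of an indexed family. -/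
def imps (AB : List (Fml α × Fml α)) : Multiset (Fml α) :=
  ↑(AB.map fun p => Fml.imp p.1 p.2)

/-- The conjunction `⋀_{i∈I} (A_i → B_i)` of an indexed family of implications. -/
def impConj (AB : List (Fml α × Fml α)) : Fml α :=
  conj (AB.map fun p => Fml.imp p.1 p.2)

/-- Truth in the one-node *irreflexive* frame `𝒦ᵢ` under a Boolean valuation:
`□A` is always true and `◇A` is always false; the propositional connectives
are evaluated classically. -/
def evalI (v : α → Bool) : Fml α → Bool
  | .atom a  => v a
  | .top     => true
  | .bot     => false
  | .and A B => evalI v A && evalI v B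
  | .or A B  => evalI v A || evalI v B
  | .imp A B => !evalI v A || evalI v B
  | .box _   => true
  | .dia _   => false

/-- Truth in the one-node *reflexive* frame `𝒦ᵣ` under a Boolean valuation:
`□A` and `◇A` take the value of `A`. -/
def evalR (v : α → Bool) : Fml α → Bool
  | .atom a  => v a
  | .top     => true
  | .bot     => false
  | .and A B => evalR v A && evalR v B
  | .or A B  => evalR v A || evalR v B
  | .imp A B => !evalR v A || evalR v B
  | .box A   => evalR v A
  | .dia A   => evalR v A

/-- Validity of a sequent with respect to a one-node semantics: under every
valuation, if all formulas of the antecedent are true then so is the succedent. -/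
def SeqValid (ev : (α → Bool) → Fml α → Bool) (Γ : Multiset (Fml α)) (Δ : Option (Fml α)) :
    Prop :=
  ∀ v : α → Bool, (∀ A ∈ Γ, ev v A = true) → ∃ B ∈ Δ, ev v B = true

/-- `CK+Ax` is T-free: every provable sequent is valid in the irreflexive node frame. -/
def TFree (Ax : Fml α → Prop) : Prop :=
  ∀ (Γ : Multiset (Fml α)) (Δ : Option (Fml α)), Derives (CKSys Ax) Γ Δ → SeqValid evalI Γ Δ

/-- `CK+Ax` is T-full: every provable sequent is valid in the reflexive node
frame and the calculus proves `⇒ □p → p` and `⇒ p → ◇p`. -/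
def TFull (Ax : Fml α → Prop) : Prop :=
  (∀ (Γ : Multiset (Fml α)) (Δ : Option (Fml α)), Derives (CKSys Ax) Γ Δ → SeqValid evalR Γ Δ) ∧
  (∀ a : α, Derives (CKSys Ax) 0 (some (.imp (.box (.atom a)) (.atom a)))) ∧
  (∀ a : α, Derives (CKSys Ax) 0 (some (.imp (.atom a) (.dia (.atom a)))))

/-- Classical validity of a (modality-free) sequent: `⋀Γ → ⋁Δ` is true under
every Boolean valuation of the atoms. -/
def ClValid (Γ : Multiset (Fml α)) (Δ : Option (Fml α)) : Prop :=
  ∀ v : α → Bool, (∀ A ∈ Γ, evalI v A = true) → ∃ B ∈ Δ, evalI v B = true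

/-- Nonempty conjunctions of atoms. -/
inductive AtomConj : Fml α → Prop where
  | single (a : α) : AtomConj (.atom a)
  | and {A B : Fml α} : AtomConj A → AtomConj B → AtomConj (.and A B)

/-- Implicational Horn formulas: `⊥`, atoms, and implications `⋀Q → r` with `Q`
a nonempty multiset of atoms and `r` an atom or `⊥`. -/
inductive ImpHorn : Fml α → Prop where
  | bot : ImpHorn (.bot : Fml α)
  | atom (a : α) : ImpHorn (.atom a)
  | impAtom {A : Fml α} (hA : AtomConj A) (a : α) : ImpHorn (.imp A (.atom a))
  | impBot {A : Fml α} (hA : AtomConj A) : ImpHorn (.imp A .bot)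

/-- Formulas of the form `◇^n p` with `p` an atom and `n ≥ 0`. -/
inductive DiaPowAtom : Fml α → Prop where
  | atom (a : α) : DiaPowAtom (.atom a)
  | dia {A : Fml α} : DiaPowAtom A → DiaPowAtom (.dia A)

/-- Nonempty conjunctions `⋀_{i=1}^k ◇^{n_i} p_i` of formulas `◇^{n_i} p_i`. -/
inductive DiaConj : Fml α → Prop where
  | single {A : Fml α} : DiaPowAtom A → DiaConj A
  | and {A B : Fml α} : DiaConj A → DiaConj B → DiaConj (.and A B)

/-- Modal Horn formulas: `⊥` and atoms, closed under `□` and under implications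
`A → B` with `A = ⋀_{i=1}^k ◇^{n_i} p_i` and `B` modal Horn. -/
inductive ModalHorn : Fml α → Prop where
  | bot : ModalHorn (.bot : Fml α)
  | atom (a : α) : ModalHorn (.atom a)
  | box {A : Fml α} : ModalHorn A → ModalHorn (.box A)
  | imp {A B : Fml α} : DiaConj A → ModalHorn B → ModalHorn (.imp A B)

/-- The predicate "all atoms of the formula satisfy `P`". -/
def Fml.AtomsIn (P : α → Prop) : Fml α → Prop
  | .atom a  => P a
  | .top     => True
  | .bot     => True
  | .and A B => A.AtomsIn P ∧ B.AtomsIn P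
  | .or A B  => A.AtomsIn P ∧ B.AtomsIn P
  | .imp A B => A.AtomsIn P ∧ B.AtomsIn P
  | .box A   => A.AtomsIn P
  | .dia A   => A.AtomsIn P

/-- No `◇` occurs in the formula. -/
def Fml.DiaFree : Fml α → Prop
  | .atom _  => True
  | .top     => True
  | .bot     => True
  | .and A B => A.DiaFree ∧ B.DiaFree
  | .or A B  => A.DiaFree ∧ B.DiaFree
  | .imp A B => A.DiaFree ∧ B.DiaFree
  | .box A   => A.DiaFree
  | .dia _   => False

/-- No `□` occurs in the formula. -/
def Fml.BoxFree : Fml α → Prop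
  | .atom _  => True
  | .top     => True
  | .bot     => True
  | .and A B => A.BoxFree ∧ B.BoxFree
  | .or A B  => A.BoxFree ∧ B.BoxFree
  | .imp A B => A.BoxFree ∧ B.BoxFree
  | .box _   => False
  | .dia A   => A.BoxFree

/-- The formula is modality-free (propositional). -/
def Fml.ModFree : Fml α → Prop
  | .atom _  => True
  | .top     => True
  | .bot     => True
  | .and A B => A.ModFree ∧ B.ModFree
  | .or A B  => A.ModFree ∧ B.ModFree
  | .imp A B => A.ModFree ∧ B.ModFree
  | .box _   => False
  | .dia _   => False

/-- An angling of the language: an injection `φ ↦ ⟨φ⟩` from formulas into the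
atoms whose image (the angled atoms) is disjoint from a fixed infinite set of
plain atoms. -/
structure Angling (α : Type) where
  angle : Fml α → α
  plain : Set α
  inj : Function.Injective angle
  plain_infinite : plain.Infinite
  disjoint : ∀ φ : Fml α, angle φ ∉ plain

/-- `a` is an angled atom. -/
def Angling.Angled (S : Angling α) (a : α) : Prop := ∃ φ : Fml α, S.angle φ = a

/-- The translation `t`: `⊥^t = ⊥`, `p^t = ⟨p⟩`, `⊤^t = ⟨⊤⟩`,
`(A ∘ B)^t = (A^t ∘ B^t) ∧ ⟨A ∘ B⟩` and `(○A)^t = (○A^t) ∧ ⟨○A⟩`. -/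
def Angling.tr (S : Angling α) : Fml α → Fml α
  | .atom a  => .atom (S.angle (.atom a))
  | .top     => .atom (S.angle .top)
  | .bot     => .bot
  | .and A B => .and (.and (S.tr A) (S.tr B)) (.atom (S.angle (.and A B)))
  | .or A B  => .and (.or (S.tr A) (S.tr B)) (.atom (S.angle (.or A B)))
  | .imp A B => .and (.imp (S.tr A) (S.tr B)) (.atom (S.angle (.imp A B)))
  | .box A   => .and (.box (S.tr A)) (.atom (S.angle (.box A)))
  | .dia A   => .and (.dia (S.tr A)) (.atom (S.angle (.dia A)))

/-- Action of the standard substitution on atoms: an angled atom `⟨φ⟩` is sent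
to `φ`; plain atoms are fixed. -/
noncomputable def Angling.stdAtom (S : Angling α) (a : α) : Fml α :=
  haveI := Classical.propDecidable (∃ φ : Fml α, S.angle φ = a)
  if h : ∃ φ : Fml α, S.angle φ = a then h.choose else .atom a

/-- The standard substitution `s`: replaces each angled atom `⟨φ⟩` by `φ`,
fixes the plain atoms, and commutes with all connectives. -/
noncomputable def Angling.std (S : Angling α) : Fml α → Fml α :=
  Fml.subst S.stdAtom

/-- The Visser–Harrop property of a calculus. -/
def VisserHarrop (R : RuleSet α) : Prop :=
  ∀ (Γ : Multiset (Fml α)), (∀ A ∈ Γ, Harrop A) →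
  ∀ (AB : List (Fml α × Fml α)) (C D : Fml α),
    Derives R (Γ + imps AB) (some (.or C D)) →
    Derives R (Γ + imps AB) (some C) ∨
    Derives R (Γ + imps AB) (some D) ∨
    ∃ p ∈ AB, Derives R (Γ + imps AB) (some p.1)

/-- The disjunction property of a calculus. -/
def DisjProp (R : RuleSet α) : Prop :=
  ∀ C D : Fml α, Derives R 0 (some (.or C D)) →
    Derives R 0 (some C) ∨ Derives R 0 (some D)

/-- The formula interpretation `I(Γ ⇒ Δ) = ⋀Γ → ⋁Δ` belongs to `L` (stated for
every enumeration of the antecedent multiset as a list). -/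
def interpIn (L : Set (Fml α)) (s : Seq α) : Prop :=
  ∀ l : List (Fml α), (↑l : Multiset (Fml α)) = s.1 → Fml.imp (conj l) (odisj s.2) ∈ L

/- Named modal axioms (with `p := atom 0`, `q := atom 1`). -/
def axTa : Fml ℕ := .imp (.box (.atom 0)) (.atom 0)
def axTb : Fml ℕ := .imp (.atom 0) (.dia (.atom 0))
def axBa : Fml ℕ := .imp (.dia (.box (.atom 0))) (.atom 0)
def axBb : Fml ℕ := .imp (.atom 0) (.box (.dia (.atom 0)))
def ax4a : Fml ℕ := .imp (.box (.atom 0)) (.box (.box (.atom 0)))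
def ax4b : Fml ℕ := .imp (.dia (.dia (.atom 0))) (.dia (.atom 0))
def ax5a : Fml ℕ := .imp (.dia (.box (.atom 0))) (.box (.atom 0))
def ax5b : Fml ℕ := .imp (.dia (.atom 0)) (.box (.dia (.atom 0)))
def axDiaBot : Fml ℕ := .imp (.dia .bot) .bot
def axDiaOr : Fml ℕ :=
  .imp (.dia (.or (.atom 0) (.atom 1))) (.or (.dia (.atom 0)) (.dia (.atom 1)))
def axBoxImp : Fml ℕ :=
  .imp (.imp (.dia (.atom 0)) (.box (.atom 1))) (.box (.imp (.atom 0) (.atom 1)))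

/-- The axioms of `X ⊆ {T, B, 4, 5}` in both their `a`- and `b`-versions. -/
def XAxioms (tT tB t4 t5 : Bool) : Set (Fml ℕ) :=
  (if tT then ({axTa, axTb} : Set (Fml ℕ)) else ∅) ∪
  (if tB then ({axBa, axBb} : Set (Fml ℕ)) else ∅) ∪
  (if t4 then ({ax4a, ax4b} : Set (Fml ℕ)) else ∅) ∪
  (if t5 then ({ax5a, ax5b} : Set (Fml ℕ)) else ∅)

/-- The additional axioms of `IK` over `CK`. -/
def IKExtra : Set (Fml ℕ) := {axDiaBot, axDiaOr, axBoxImp}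

/-- The right rule with premises `{Γ, φ̄_i ⇒ ψ̄_i}_{i∈I}` and conclusion
`Γ, θ̄ ⇒ η̄`, closed under all substitutions of formulas for atoms and
multisets for the context `Γ`. -/
def rightRuleInst (prems : List (List (Fml α) × Option (Fml α)))
    (θ : List (Fml α)) (η : Option (Fml α)) : RuleSet α := fun ps c =>
  ∃ (σ : α → Fml α) (Γ : Multiset (Fml α)),
    ps = prems.map (fun pr =>
        ((Γ + ↑(pr.1.map (Fml.subst σ)) : Multiset (Fml α)), pr.2.map (Fml.subst σ))) ∧
    c = ((Γ + ↑(θ.map (Fml.subst σ)) : Multiset (Fml α)), η.map (Fml.subst σ))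

/-- The left rule with premises `{Γ, φ̄_i ⇒ ψ̄_i}_{i∈I} ∪ {Γ, θ̄_j ⇒ Δ}_{j∈J}`
and conclusion `Γ, η̄ ⇒ Δ`, closed under all substitutions of formulas for
atoms and multisets for `Γ` and `Δ`. -/
def leftRuleInst (prems : List (List (Fml α) × Option (Fml α)))
    (lefts : List (List (Fml α))) (η : List (Fml α)) : RuleSet α := fun ps c =>
  ∃ (σ : α → Fml α) (Γ : Multiset (Fml α)) (Δ : Option (Fml α)),
    ps = prems.map (fun pr =>
          ((Γ + ↑(pr.1.map (Fml.subst σ)) : Multiset (Fml α)), pr.2.map (Fml.subst σ)))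
        ++ lefts.map (fun θj => ((Γ + ↑(θj.map (Fml.subst σ)) : Multiset (Fml α)), Δ)) ∧
    c = ((Γ + ↑(η.map (Fml.subst σ)) : Multiset (Fml α)), Δ)

/-- The formula `Ax_R` of a right rule. -/
def AxRight (prems : List (List (Fml α) × Option (Fml α)))
    (θ : List (Fml α)) (η : Option (Fml α)) : Fml α :=
  .imp (.and (conj (prems.map fun pr => .imp (conj pr.1) (odisj pr.2))) (conj θ)) (odisj η)

/-- The formula `Ax_R` of a left rule. -/
def AxLeft (prems : List (List (Fml α) × Option (Fml α)))
    (lefts : List (List (Fml α))) (η : List (Fml α)) : Fml α :=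
  .imp (.and (conj (prems.map fun pr => .imp (conj pr.1) (odisj pr.2))) (conj η))
    (disj (lefts.map conj))

/-- The forgetful translation `f_i`: fixes atoms, `⊤`, `⊥`, commutes with
`∧`, `∨`, `→`, `□`, and sends every `◇A` to `⊥`. -/
def fi : Fml α → Fml α
  | .atom a  => .atom a
  | .top     => .top
  | .bot     => .bot
  | .and A B => .and (fi A) (fi B)
  | .or A B  => .or (fi A) (fi B)
  | .imp A B => .imp (fi A) (fi B)
  | .box A   => .box (fi A)
  | .dia _   => .bot

/-- The forgetful translation `f_r`: fixes atoms, `⊤`, `⊥`, commutes with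
`∧`, `∨`, `→`, `□`, and sends `◇A` to `f_r A`. -/
def fr : Fml α → Fml α
  | .atom a  => .atom a
  | .top     => .top
  | .bot     => .bot
  | .and A B => .and (fr A) (fr B)
  | .or A B  => .or (fr A) (fr B)
  | .imp A B => .imp (fr A) (fr B)
  | .box A   => .box (fr A)
  | .dia A   => fr A


section Proof7

variable {α : Type}

/-- Derivability in pure `CK` (no extra axioms). -/
abbrev CKD : Multiset (Fml α) → Option (Fml α) → Prop :=
  Derives (CKSys (fun _ : Fml α => False))

lemma lj0 {Γ : Multiset (Fml α)} {Δ : Option (Fml α)}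
    (h : LJRule ([] : List (Seq α)) (Γ, Δ)) : CKD Γ Δ := by
  have hr : CKSys (fun _ : Fml α => False) [] (Γ, Δ) := Or.inl h
  exact .step hr (by intro p hp; cases hp)

lemma lj1 {Γ₁ Γ : Multiset (Fml α)} {Δ₁ Δ : Option (Fml α)}
    (h : LJRule [(Γ₁, Δ₁)] (Γ, Δ)) (h1 : CKD Γ₁ Δ₁) : CKD Γ Δ := by
  have hr : CKSys (fun _ : Fml α => False) [(Γ₁, Δ₁)] (Γ, Δ) := Or.inl h
  exact .step hr (by rintro p hp; rcases List.mem_singleton.1 hp with rfl; exact h1)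

lemma lj2 {Γ₁ Γ₂ Γ : Multiset (Fml α)} {Δ₁ Δ₂ Δ : Option (Fml α)}
    (h : LJRule [(Γ₁, Δ₁), (Γ₂, Δ₂)] (Γ, Δ)) (h1 : CKD Γ₁ Δ₁) (h2 : CKD Γ₂ Δ₂) : CKD Γ Δ := by
  have hr : CKSys (fun _ : Fml α => False) [(Γ₁, Δ₁), (Γ₂, Δ₂)] (Γ, Δ) := Or.inl h
  refine .step hr ?_
  rintro p hp
  rcases hp with _ | ⟨_, hp⟩
  · exact h1
  · rcases List.mem_singleton.1 hp with rfl; exact h2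

lemma d_id {Γ : Multiset (Fml α)} {A : Fml α} (h : A ∈ Γ) : CKD Γ (some A) := by
  obtain ⟨s, rfl⟩ := Multiset.exists_cons_of_mem h; exact lj0 (.id _ _)

lemma d_bot {Γ : Multiset (Fml α)} {Δ : Option (Fml α)} (h : .bot ∈ Γ) : CKD Γ Δ := by
  obtain ⟨s, rfl⟩ := Multiset.exists_cons_of_mem h; exact lj0 (.botL _ _)

lemma d_top {Γ : Multiset (Fml α)} : CKD Γ (some .top) := lj0 (.topR _)

lemma d_wL {Γ : Multiset (Fml α)} {Δ : Option (Fml α)} {A : Fml α}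
    (h : CKD Γ Δ) : CKD (A ::ₘ Γ) Δ := lj1 (.wL _ _ _) h

lemma d_cut {Γ : Multiset (Fml α)} {Δ : Option (Fml α)} {A : Fml α}
    (h1 : CKD Γ (some A)) (h2 : CKD (A ::ₘ Γ) Δ) : CKD Γ Δ := lj2 (.cut A Γ Δ) h1 h2

lemma d_weakAdd {Γ : Multiset (Fml α)} {Δ : Option (Fml α)} (Θ : Multiset (Fml α))
    (h : CKD Γ Δ) : CKD (Θ + Γ) Δ := by
  induction Θ using Multiset.induction with
  | empty => simpa using h
  | cons a s ih => rw [Multiset.cons_add]; exact d_wL ih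

lemma d_absorb {Δ : Option (Fml α)} (Γ₀ : Multiset (Fml α)) {Γ : Multiset (Fml α)}
    (hs : ∀ F ∈ Γ₀, F ∈ Γ) (h : CKD (Γ₀ + Γ) Δ) : CKD Γ Δ := by
  induction Γ₀ using Multiset.induction with
  | empty => simpa using h
  | cons a s ih =>
    rw [Multiset.cons_add] at h
    have ha : CKD (s + Γ) (some a) :=
      d_id (Multiset.mem_add.2 (Or.inr (hs a (Multiset.mem_cons_self a s))))
    exact ih (fun F hF => hs F (Multiset.mem_cons_of_mem hF)) (d_cut ha h)

lemma d_sub {Γ₀ Γ : Multiset (Fml α)} {Δ : Option (Fml α)}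
    (h : CKD Γ₀ Δ) (hs : ∀ F ∈ Γ₀, F ∈ Γ) : CKD Γ Δ := by
  refine d_absorb Γ₀ hs ?_
  have := d_weakAdd (Γ := Γ₀) (Δ := Δ) Γ h
  rwa [add_comm] at this

lemma d_andL₁ {Γ : Multiset (Fml α)} {Δ : Option (Fml α)} {P Q : Fml α}
    (h : .and P Q ∈ Γ) (h1 : CKD (P ::ₘ Γ) Δ) : CKD Γ Δ :=
  d_sub (lj1 (.andL₁ P Q Γ Δ) h1) (by
    intro F hF
    rcases Multiset.mem_cons.1 hF with rfl | hF
    · exact h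
    · exact hF)

lemma d_andL₂ {Γ : Multiset (Fml α)} {Δ : Option (Fml α)} {P Q : Fml α}
    (h : .and P Q ∈ Γ) (h1 : CKD (Q ::ₘ Γ) Δ) : CKD Γ Δ :=
  d_sub (lj1 (.andL₂ P Q Γ Δ) h1) (by
    intro F hF
    rcases Multiset.mem_cons.1 hF with rfl | hF
    · exact h
    · exact hF)

lemma d_orL {Γ : Multiset (Fml α)} {Δ : Option (Fml α)} {P Q : Fml α}
    (h : .or P Q ∈ Γ) (h1 : CKD (P ::ₘ Γ) Δ) (h2 : CKD (Q ::ₘ Γ) Δ) : CKD Γ Δ :=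
  d_sub (lj2 (.orL P Q Γ Δ) h1 h2) (by
    intro F hF
    rcases Multiset.mem_cons.1 hF with rfl | hF
    · exact h
    · exact hF)

lemma d_impL {Γ : Multiset (Fml α)} {Δ : Option (Fml α)} {P Q : Fml α}
    (h : .imp P Q ∈ Γ) (h1 : CKD Γ (some P)) (h2 : CKD (Q ::ₘ Γ) Δ) : CKD Γ Δ :=
  d_sub (lj2 (.impL P Q Γ Δ) h1 h2) (by
    intro F hF
    rcases Multiset.mem_cons.1 hF with rfl | hF
    · exact h
    · exact hF)

lemma d_andR {Γ : Multiset (Fml α)} {A B : Fml α}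
    (h1 : CKD Γ (some A)) (h2 : CKD Γ (some B)) : CKD Γ (some (.and A B)) :=
  lj2 (.andR A B Γ) h1 h2

lemma d_orR₁ {Γ : Multiset (Fml α)} {A B : Fml α}
    (h1 : CKD Γ (some A)) : CKD Γ (some (.or A B)) := lj1 (.orR₁ A B Γ) h1

lemma d_orR₂ {Γ : Multiset (Fml α)} {A B : Fml α}
    (h1 : CKD Γ (some B)) : CKD Γ (some (.or A B)) := lj1 (.orR₂ A B Γ) h1

lemma d_impR {Γ : Multiset (Fml α)} {A B : Fml α}
    (h1 : CKD (A ::ₘ Γ) (some B)) : CKD Γ (some (.imp A B)) := lj1 (.impR A B Γ) h1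

lemma d_kbox {Γ : Multiset (Fml α)} {A : Fml α}
    (h : CKD Γ (some A)) : CKD (Γ.map .box) (some (.box A)) :=
  by
  have hr : CKSys (fun _ : Fml α => False) [(Γ, some A)] (Γ.map .box, some (.box A)) :=
    Or.inr (Or.inl (KBoxRule.mk Γ A))
  exact .step hr (by rintro p hp; rcases List.mem_singleton.1 hp with rfl; exact h)

lemma d_kdia {Γ : Multiset (Fml α)} {A B : Fml α}
    (h : CKD (A ::ₘ Γ) (some B)) : CKD (.dia A ::ₘ Γ.map .box) (some (.dia B)) :=
  by
  have hr : CKSys (fun _ : Fml α => False) [(A ::ₘ Γ, some B)]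
      (.dia A ::ₘ Γ.map .box, some (.dia B)) :=
    Or.inr (Or.inr (Or.inl (KDiaRule.mk Γ A B)))
  exact .step hr (by rintro p hp; rcases List.mem_singleton.1 hp with rfl; exact h)

lemma d_imp_id {X : Fml α} : CKD 0 (some (.imp X X)) := d_impR (d_id (by simp))

lemma d_proj₁ {X Y : Fml α} : CKD 0 (some (.imp (.and X Y) X)) :=
  d_impR (d_andL₁ (P := X) (Q := Y) (by simp) (d_id (by simp)))

lemma d_proj₂ {X Y : Fml α} : CKD 0 (some (.imp (.and X Y) Y)) :=
  d_impR (d_andL₂ (P := X) (Q := Y) (by simp) (d_id (by simp)))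

lemma d_inj₁ {X Y : Fml α} : CKD 0 (some (.imp X (.or X Y))) :=
  d_impR (d_orR₁ (d_id (by simp)))

lemma d_inj₂ {X Y : Fml α} : CKD 0 (some (.imp Y (.or X Y))) :=
  d_impR (d_orR₂ (d_id (by simp)))

lemma d_mp_thm {X Y : Fml α} : CKD 0 (some (.imp (.and (.imp X Y) X) Y)) := by
  refine d_impR (d_andL₂ (P := .imp X Y) (Q := X) (by simp) (d_andL₁ (P := .imp X Y) (Q := X)
    (by simp) (d_impL (P := X) (Q := Y) (by simp) (d_id (by simp)) (d_id (by simp)))))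

lemma d_boxThm {Z : Fml α} (h : CKD 0 (some Z)) : CKD 0 (some (.box Z)) := by
  have := d_kbox (Γ := (0 : Multiset (Fml α))) h
  simpa using this

/-- From `tr ψ` in the context one can always derive `⟨ψ⟩`. -/
lemma tr_angle (S : Angling α) (ψ : Fml α) {Γ : Multiset (Fml α)}
    (h : S.tr ψ ∈ Γ) : CKD Γ (some (.atom (S.angle ψ))) := by
  cases ψ with
  | atom a => exact d_id h
  | top => exact d_id h
  | bot => exact d_bot h
  | and A B => exact d_andL₂ h (d_id (by simp))
  | or A B => exact d_andL₂ h (d_id (by simp))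
  | imp A B => exact d_andL₂ h (d_id (by simp))
  | box A => exact d_andL₂ h (d_id (by simp))
  | dia A => exact d_andL₂ h (d_id (by simp))

lemma stdAtom_angle (S : Angling α) (ψ : Fml α) : S.stdAtom (S.angle ψ) = ψ := by
  unfold Angling.stdAtom
  have h : ∃ φ : Fml α, S.angle φ = S.angle ψ := ⟨ψ, rfl⟩
  rw [dif_pos h]
  exact S.inj h.choose_spec

lemma std_angle (S : Angling α) (ψ : Fml α) : S.std (.atom (S.angle ψ)) = ψ := by
  simp [Angling.std, Fml.subst, stdAtom_angle]

/-- The conditions on the auxiliary multiset `Υ`. -/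
def Good (S : Angling α) (Υ : List (Fml α)) : Prop :=
  ∀ F ∈ Υ, ModalHorn F ∧ F.AtomsIn S.Angled ∧ CKD 0 (some (S.std F))

lemma Good.nil {S : Angling α} : Good S [] := by intro F hF; simp at hF

lemma Good.append {S : Angling α} {l₁ l₂ : List (Fml α)}
    (h₁ : Good S l₁) (h₂ : Good S l₂) : Good S (l₁ ++ l₂) := by
  intro F hF
  rcases List.mem_append.1 hF with h | h
  · exact h₁ F h
  · exact h₂ F h

lemma Good.cons {S : Angling α} {F₀ : Fml α} {l : List (Fml α)}
    (h₀ : ModalHorn F₀ ∧ F₀.AtomsIn S.Angled ∧ CKD 0 (some (S.std F₀)))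
    (h : Good S l) : Good S (F₀ :: l) := by
  intro F hF
  rcases List.mem_cons.1 hF with rfl | hF
  · exact h₀
  · exact h F hF

lemma std_box {S : Angling α} {F : Fml α} : S.std (.box F) = .box (S.std F) := rfl

lemma Good.mapBox {S : Angling α} {l : List (Fml α)} (h : Good S l) :
    Good S (l.map .box) := by
  intro F hF
  rcases List.mem_map.1 hF with ⟨G, hG, rfl⟩
  obtain ⟨h1, h2, h3⟩ := h G hG
  exact ⟨.box h1, h2, by rw [std_box]; exact d_boxThm h3⟩

lemma d_conj {l : List (Fml α)} (h : ∀ F ∈ l, CKD 0 (some F)) :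
    CKD 0 (some (conj l)) := by
  induction l with
  | nil => exact d_top
  | cons A l ih =>
    cases l with
    | nil => simpa [conj] using h A (by simp)
    | cons B l' =>
      exact d_andR (h A (by simp)) (ih (fun F hF => h F (by simp [hF])))

end Proof7


section Main

lemma basic_fwd (S : Angling ℕ) {k : ℕ} (φ : Fin k → Fml ℕ) {B : Fml (Fin k)} (hB : Basic B) :
    ∃ Υ : List (Fml ℕ), Good S Υ ∧
      ∀ Γ : Multiset (Fml ℕ), B.subst (fun i => S.tr (φ i)) ∈ Γ → (∀ F ∈ Υ, F ∈ Γ) →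
        CKD Γ (some (S.tr (B.subst φ))) := by
  induction hB with
  | atom a =>
      refine ⟨[], Good.nil, ?_⟩
      intro Γ hm _
      simpa [Fml.subst] using d_id hm
  | top =>
      refine ⟨[.atom (S.angle .top)], ?_, ?_⟩
      · exact Good.cons ⟨.atom _, ⟨.top, rfl⟩, by rw [std_angle]; exact d_top⟩ Good.nil
      · intro Γ _ hups
        simpa [Fml.subst, Angling.tr] using d_id (hups _ (List.mem_cons_self))
  | bot =>
      refine ⟨[], Good.nil, ?_⟩
      intro Γ hm _
      exact d_bot (by simpa [Fml.subst] using hm)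
  | @and B C hB hC ihB ihC =>
      obtain ⟨ΥB, gB, dB⟩ := ihB
      obtain ⟨ΥC, gC, dC⟩ := ihC
      refine ⟨.imp (.and (.atom (S.angle (B.subst φ))) (.atom (S.angle (C.subst φ))))
          (.atom (S.angle (.and (B.subst φ) (C.subst φ)))) :: (ΥB ++ ΥC), ?_, ?_⟩
      · refine Good.cons ⟨?_, ?_, ?_⟩ (gB.append gC)
        · exact .imp (.and (.single (.atom _)) (.single (.atom _))) (.atom _)
        · exact ⟨⟨⟨_, rfl⟩, ⟨_, rfl⟩⟩, ⟨_, rfl⟩⟩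
        · simp only [Angling.std, Fml.subst, stdAtom_angle]
          exact d_imp_id
      · intro Γ hm hups
        have hBC : Fml.and (B.subst (fun i => S.tr (φ i))) (C.subst (fun i => S.tr (φ i))) ∈ Γ := by
          simpa [Fml.subst] using hm
        have trB : CKD Γ (some (S.tr (B.subst φ))) :=
          d_andL₁ hBC (dB _ (Multiset.mem_cons_self _ _)
            (fun F hF => Multiset.mem_cons_of_mem (hups F (by simp [hF]))))
        have trC : CKD Γ (some (S.tr (C.subst φ))) :=
          d_andL₂ hBC (dC _ (Multiset.mem_cons_self _ _)
            (fun F hF => Multiset.mem_cons_of_mem (hups F (by simp [hF]))))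
        have hangB : CKD Γ (some (.atom (S.angle (B.subst φ)))) :=
          d_cut trB (tr_angle S _ (Multiset.mem_cons_self _ _))
        have hangC : CKD Γ (some (.atom (S.angle (C.subst φ)))) :=
          d_cut trC (tr_angle S _ (Multiset.mem_cons_self _ _))
        have hang : CKD Γ (some (.atom (S.angle (.and (B.subst φ) (C.subst φ))))) :=
          d_impL (hups _ (List.mem_cons_self)) (d_andR hangB hangC)
            (d_id (Multiset.mem_cons_self _ _))
        simp only [Fml.subst, Angling.tr]
        exact d_andR (d_andR trB trC) hang
  | @or B C hB hC ihB ihC =>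
      obtain ⟨ΥB, gB, dB⟩ := ihB
      obtain ⟨ΥC, gC, dC⟩ := ihC
      refine ⟨.imp (.atom (S.angle (B.subst φ))) (.atom (S.angle (.or (B.subst φ) (C.subst φ)))) ::
          .imp (.atom (S.angle (C.subst φ))) (.atom (S.angle (.or (B.subst φ) (C.subst φ)))) ::
          (ΥB ++ ΥC), ?_, ?_⟩
      · refine Good.cons ⟨.imp (.single (.atom _)) (.atom _), ⟨⟨_, rfl⟩, ⟨_, rfl⟩⟩, ?_⟩
          (Good.cons ⟨.imp (.single (.atom _)) (.atom _), ⟨⟨_, rfl⟩, ⟨_, rfl⟩⟩, ?_⟩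
            (gB.append gC))
        · simp only [Angling.std, Fml.subst, stdAtom_angle]; exact d_inj₁
        · simp only [Angling.std, Fml.subst, stdAtom_angle]; exact d_inj₂
      · intro Γ hm hups
        have hBC : Fml.or (B.subst (fun i => S.tr (φ i))) (C.subst (fun i => S.tr (φ i))) ∈ Γ := by
          simpa [Fml.subst] using hm
        simp only [Fml.subst, Angling.tr]
        refine d_orL hBC ?_ ?_
        · have trB : CKD (B.subst (fun i => S.tr (φ i)) ::ₘ Γ) (some (S.tr (B.subst φ))) :=
            dB _ (Multiset.mem_cons_self _ _)
              (fun F hF => Multiset.mem_cons_of_mem (hups F (by simp [hF])))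
          refine d_andR (d_orR₁ trB) ?_
          exact d_impL (Multiset.mem_cons_of_mem (hups _ (List.mem_cons_self)))
            (d_cut trB (tr_angle S _ (Multiset.mem_cons_self _ _)))
            (d_id (Multiset.mem_cons_self _ _))
        · have trC : CKD (C.subst (fun i => S.tr (φ i)) ::ₘ Γ) (some (S.tr (C.subst φ))) :=
            dC _ (Multiset.mem_cons_self _ _)
              (fun F hF => Multiset.mem_cons_of_mem (hups F (by simp [hF])))
          refine d_andR (d_orR₂ trC) ?_
          exact d_impL (Multiset.mem_cons_of_mem
              (hups _ (List.mem_cons_of_mem _ (List.mem_cons_self))))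
            (d_cut trC (tr_angle S _ (Multiset.mem_cons_self _ _)))
            (d_id (Multiset.mem_cons_self _ _))
  | @dia C hC ihC =>
      obtain ⟨ΥC, gC, dC⟩ := ihC
      refine ⟨.imp (.dia (.atom (S.angle (C.subst φ)))) (.atom (S.angle (.dia (C.subst φ)))) ::
          ΥC.map .box, ?_, ?_⟩
      · refine Good.cons ⟨.imp (.single (.dia (.atom _))) (.atom _), ⟨⟨_, rfl⟩, ⟨_, rfl⟩⟩, ?_⟩
          gC.mapBox
        simp only [Angling.std, Fml.subst, stdAtom_angle]
        exact d_imp_id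
      · intro Γ hm hups
        have hd : Fml.dia (C.subst (fun i => S.tr (φ i))) ∈ Γ := by simpa [Fml.subst] using hm
        have base : CKD (C.subst (fun i => S.tr (φ i)) ::ₘ (↑ΥC : Multiset (Fml ℕ)))
            (some (S.tr (C.subst φ))) :=
          dC _ (Multiset.mem_cons_self _ _)
            (fun F hF => Multiset.mem_cons_of_mem (Multiset.mem_coe.2 hF))
        have base2 : CKD (C.subst (fun i => S.tr (φ i)) ::ₘ (↑ΥC : Multiset (Fml ℕ)))
            (some (.atom (S.angle (C.subst φ)))) :=
          d_cut base (tr_angle S _ (Multiset.mem_cons_self _ _))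
        have hsub : ∀ F ∈ (Fml.dia (C.subst fun i => S.tr (φ i)) ::ₘ
            ((↑ΥC : Multiset (Fml ℕ)).map .box)), F ∈ Γ := by
          intro F hF
          rcases Multiset.mem_cons.1 hF with rfl | hF
          · exact hd
          · rcases Multiset.mem_map.1 hF with ⟨G, hG, rfl⟩
            exact hups _ (List.mem_cons_of_mem _ (List.mem_map_of_mem (Multiset.mem_coe.1 hG)))
        have k1 : CKD Γ (some (.dia (S.tr (C.subst φ)))) := d_sub (d_kdia base) hsub
        have k2 : CKD Γ (some (.dia (.atom (S.angle (C.subst φ))))) := d_sub (d_kdia base2) hsub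
        have hang : CKD Γ (some (.atom (S.angle (.dia (C.subst φ))))) :=
          d_impL (hups _ (List.mem_cons_self)) k2 (d_id (Multiset.mem_cons_self _ _))
        simp only [Fml.subst, Angling.tr]
        exact d_andR k1 hang

lemma basic_rev (S : Angling ℕ) {k : ℕ} (φ : Fin k → Fml ℕ) {B : Fml (Fin k)} (hB : Basic B) :
    ∃ Υ : List (Fml ℕ), Good S Υ ∧
      ∀ Γ : Multiset (Fml ℕ), S.tr (B.subst φ) ∈ Γ → (∀ F ∈ Υ, F ∈ Γ) →
        CKD Γ (some (B.subst (fun i => S.tr (φ i)))) := by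
  induction hB with
  | atom a =>
      refine ⟨[], Good.nil, ?_⟩
      intro Γ hm _
      simpa [Fml.subst] using d_id hm
  | top =>
      refine ⟨[], Good.nil, ?_⟩
      intro Γ _ _
      simpa [Fml.subst] using (d_top (Γ := Γ))
  | bot =>
      refine ⟨[], Good.nil, ?_⟩
      intro Γ hm _
      exact d_bot (by simpa [Fml.subst, Angling.tr] using hm)
  | @and B C hB hC ihB ihC =>
      obtain ⟨ΥB, gB, dB⟩ := ihB
      obtain ⟨ΥC, gC, dC⟩ := ihC
      refine ⟨ΥB ++ ΥC, gB.append gC, ?_⟩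
      intro Γ hm hups
      have hm' : Fml.and (.and (S.tr (B.subst φ)) (S.tr (C.subst φ)))
          (.atom (S.angle (.and (B.subst φ) (C.subst φ)))) ∈ Γ := by
        simpa [Fml.subst, Angling.tr] using hm
      simp only [Fml.subst]
      refine d_andR ?_ ?_
      · refine d_andL₁ hm' (d_andL₁ (P := S.tr (B.subst φ)) (Q := S.tr (C.subst φ))
          (Multiset.mem_cons_self _ _) ?_)
        exact dB _ (Multiset.mem_cons_self _ _)
          (fun F hF => Multiset.mem_cons_of_mem (Multiset.mem_cons_of_mem (hups F (by simp [hF]))))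
      · refine d_andL₁ hm' (d_andL₂ (P := S.tr (B.subst φ)) (Q := S.tr (C.subst φ))
          (Multiset.mem_cons_self _ _) ?_)
        exact dC _ (Multiset.mem_cons_self _ _)
          (fun F hF => Multiset.mem_cons_of_mem (Multiset.mem_cons_of_mem (hups F (by simp [hF]))))
  | @or B C hB hC ihB ihC =>
      obtain ⟨ΥB, gB, dB⟩ := ihB
      obtain ⟨ΥC, gC, dC⟩ := ihC
      refine ⟨ΥB ++ ΥC, gB.append gC, ?_⟩
      intro Γ hm hups
      have hm' : Fml.and (.or (S.tr (B.subst φ)) (S.tr (C.subst φ)))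
          (.atom (S.angle (.or (B.subst φ) (C.subst φ)))) ∈ Γ := by
        simpa [Fml.subst, Angling.tr] using hm
      simp only [Fml.subst]
      refine d_andL₁ hm' (d_orL (P := S.tr (B.subst φ)) (Q := S.tr (C.subst φ))
        (Multiset.mem_cons_self _ _) ?_ ?_)
      · refine d_orR₁ ?_
        exact dB _ (Multiset.mem_cons_self _ _)
          (fun F hF => Multiset.mem_cons_of_mem (Multiset.mem_cons_of_mem (hups F (by simp [hF]))))
      · refine d_orR₂ ?_
        exact dC _ (Multiset.mem_cons_self _ _)
          (fun F hF => Multiset.mem_cons_of_mem (Multiset.mem_cons_of_mem (hups F (by simp [hF]))))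
  | @dia C hC ihC =>
      obtain ⟨ΥC, gC, dC⟩ := ihC
      refine ⟨ΥC.map .box, gC.mapBox, ?_⟩
      intro Γ hm hups
      have hm' : Fml.and (.dia (S.tr (C.subst φ))) (.atom (S.angle (.dia (C.subst φ)))) ∈ Γ := by
        simpa [Fml.subst, Angling.tr] using hm
      simp only [Fml.subst]
      refine d_andL₁ hm' ?_
      have base : CKD (S.tr (C.subst φ) ::ₘ (↑ΥC : Multiset (Fml ℕ)))
          (some (C.subst (fun i => S.tr (φ i)))) :=
        dC _ (Multiset.mem_cons_self _ _)
          (fun F hF => Multiset.mem_cons_of_mem (Multiset.mem_coe.2 hF))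
      refine d_sub (d_kdia base) ?_
      intro F hF
      rcases Multiset.mem_cons.1 hF with rfl | hF
      · exact Multiset.mem_cons_self _ _
      · rcases Multiset.mem_map.1 hF with ⟨G, hG, rfl⟩
        exact Multiset.mem_cons_of_mem (hups _ (List.mem_map_of_mem (Multiset.mem_coe.1 hG)))

lemma ap_rev (S : Angling ℕ) {k : ℕ} (φ : Fin k → Fml ℕ) {B : Fml (Fin k)} (hB : AlmostPos B) :
    ∃ Υ : List (Fml ℕ), Good S Υ ∧
      ∀ Γ : Multiset (Fml ℕ), S.tr (B.subst φ) ∈ Γ → (∀ F ∈ Υ, F ∈ Γ) →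
        CKD Γ (some (B.subst (fun i => S.tr (φ i)))) := by
  induction hB with
  | basic h => exact basic_rev S φ h
  | @and B C hB hC ihB ihC =>
      obtain ⟨ΥB, gB, dB⟩ := ihB
      obtain ⟨ΥC, gC, dC⟩ := ihC
      refine ⟨ΥB ++ ΥC, gB.append gC, ?_⟩
      intro Γ hm hups
      have hm' : Fml.and (.and (S.tr (B.subst φ)) (S.tr (C.subst φ)))
          (.atom (S.angle (.and (B.subst φ) (C.subst φ)))) ∈ Γ := by
        simpa [Fml.subst, Angling.tr] using hm
      simp only [Fml.subst]
      refine d_andR ?_ ?_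
      · refine d_andL₁ hm' (d_andL₁ (P := S.tr (B.subst φ)) (Q := S.tr (C.subst φ))
          (Multiset.mem_cons_self _ _) ?_)
        exact dB _ (Multiset.mem_cons_self _ _)
          (fun F hF => Multiset.mem_cons_of_mem (Multiset.mem_cons_of_mem (hups F (by simp [hF]))))
      · refine d_andL₁ hm' (d_andL₂ (P := S.tr (B.subst φ)) (Q := S.tr (C.subst φ))
          (Multiset.mem_cons_self _ _) ?_)
        exact dC _ (Multiset.mem_cons_self _ _)
          (fun F hF => Multiset.mem_cons_of_mem (Multiset.mem_cons_of_mem (hups F (by simp [hF]))))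
  | @or B C hB hC ihB ihC =>
      obtain ⟨ΥB, gB, dB⟩ := ihB
      obtain ⟨ΥC, gC, dC⟩ := ihC
      refine ⟨ΥB ++ ΥC, gB.append gC, ?_⟩
      intro Γ hm hups
      have hm' : Fml.and (.or (S.tr (B.subst φ)) (S.tr (C.subst φ)))
          (.atom (S.angle (.or (B.subst φ) (C.subst φ)))) ∈ Γ := by
        simpa [Fml.subst, Angling.tr] using hm
      simp only [Fml.subst]
      refine d_andL₁ hm' (d_orL (P := S.tr (B.subst φ)) (Q := S.tr (C.subst φ))
        (Multiset.mem_cons_self _ _) ?_ ?_)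
      · refine d_orR₁ ?_
        exact dB _ (Multiset.mem_cons_self _ _)
          (fun F hF => Multiset.mem_cons_of_mem (Multiset.mem_cons_of_mem (hups F (by simp [hF]))))
      · refine d_orR₂ ?_
        exact dC _ (Multiset.mem_cons_self _ _)
          (fun F hF => Multiset.mem_cons_of_mem (Multiset.mem_cons_of_mem (hups F (by simp [hF]))))
  | @box C hC ihC =>
      obtain ⟨ΥC, gC, dC⟩ := ihC
      refine ⟨ΥC.map .box, gC.mapBox, ?_⟩
      intro Γ hm hups
      have hm' : Fml.and (.box (S.tr (C.subst φ))) (.atom (S.angle (.box (C.subst φ)))) ∈ Γ := by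
        simpa [Fml.subst, Angling.tr] using hm
      simp only [Fml.subst]
      refine d_andL₁ hm' ?_
      have base : CKD (S.tr (C.subst φ) ::ₘ (↑ΥC : Multiset (Fml ℕ)))
          (some (C.subst (fun i => S.tr (φ i)))) :=
        dC _ (Multiset.mem_cons_self _ _)
          (fun F hF => Multiset.mem_cons_of_mem (Multiset.mem_coe.2 hF))
      have k := d_kbox base
      rw [Multiset.map_cons] at k
      refine d_sub k ?_
      intro F hF
      rcases Multiset.mem_cons.1 hF with rfl | hF
      · exact Multiset.mem_cons_self _ _
      · rcases Multiset.mem_map.1 hF with ⟨G, hG, rfl⟩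
        exact Multiset.mem_cons_of_mem (hups _ (List.mem_map_of_mem (Multiset.mem_coe.1 hG)))
  | @dia C hC ihC =>
      obtain ⟨ΥC, gC, dC⟩ := ihC
      refine ⟨ΥC.map .box, gC.mapBox, ?_⟩
      intro Γ hm hups
      have hm' : Fml.and (.dia (S.tr (C.subst φ))) (.atom (S.angle (.dia (C.subst φ)))) ∈ Γ := by
        simpa [Fml.subst, Angling.tr] using hm
      simp only [Fml.subst]
      refine d_andL₁ hm' ?_
      have base : CKD (S.tr (C.subst φ) ::ₘ (↑ΥC : Multiset (Fml ℕ)))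
          (some (C.subst (fun i => S.tr (φ i)))) :=
        dC _ (Multiset.mem_cons_self _ _)
          (fun F hF => Multiset.mem_cons_of_mem (Multiset.mem_coe.2 hF))
      refine d_sub (d_kdia base) ?_
      intro F hF
      rcases Multiset.mem_cons.1 hF with rfl | hF
      · exact Multiset.mem_cons_self _ _
      · rcases Multiset.mem_map.1 hF with ⟨G, hG, rfl⟩
        exact Multiset.mem_cons_of_mem (hups _ (List.mem_map_of_mem (Multiset.mem_coe.1 hG)))
  | @imp B C hB hC ihC =>
      obtain ⟨ΥB, gB, dB⟩ := basic_fwd S φ hB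
      obtain ⟨ΥC, gC, dC⟩ := ihC
      refine ⟨ΥB ++ ΥC, gB.append gC, ?_⟩
      intro Γ hm hups
      have hm' : Fml.and (.imp (S.tr (B.subst φ)) (S.tr (C.subst φ)))
          (.atom (S.angle (.imp (B.subst φ) (C.subst φ)))) ∈ Γ := by
        simpa [Fml.subst, Angling.tr] using hm
      simp only [Fml.subst]
      refine d_impR ?_
      have trB : CKD (B.subst (fun i => S.tr (φ i)) ::ₘ Γ) (some (S.tr (B.subst φ))) :=
        dB _ (Multiset.mem_cons_self _ _)
          (fun F hF => Multiset.mem_cons_of_mem (hups F (by simp [hF])))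
      refine d_cut trB ?_
      refine d_andL₁ (Multiset.mem_cons_of_mem (Multiset.mem_cons_of_mem hm')) ?_
      refine d_impL (P := S.tr (B.subst φ)) (Q := S.tr (C.subst φ))
        (Multiset.mem_cons_self _ _)
        (d_id (Multiset.mem_cons_of_mem (Multiset.mem_cons_self _ _))) ?_
      exact dC _ (Multiset.mem_cons_self _ _)
        (fun F hF => Multiset.mem_cons_of_mem <| Multiset.mem_cons_of_mem <|
          Multiset.mem_cons_of_mem <| Multiset.mem_cons_of_mem (hups F (by simp [hF])))

lemma con_fwd (S : Angling ℕ) {k : ℕ} (φ : Fin k → Fml ℕ) {A : Fml (Fin k)}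
    (hA : Constructive A) :
    ∃ Υ : List (Fml ℕ), Good S Υ ∧
      ∀ Γ : Multiset (Fml ℕ), .atom (S.angle (A.subst φ)) ∈ Γ →
        A.subst (fun i => S.tr (φ i)) ∈ Γ → (∀ F ∈ Υ, F ∈ Γ) →
        CKD Γ (some (S.tr (A.subst φ))) := by
  induction hA with
  | basic h =>
      obtain ⟨Υ, g, d⟩ := basic_fwd S φ h
      exact ⟨Υ, g, fun Γ _ hm hups => d Γ hm hups⟩
  | @and B C hB hC ihB ihC =>
      obtain ⟨ΥB, gB, dB⟩ := ihB
      obtain ⟨ΥC, gC, dC⟩ := ihC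
      refine ⟨.imp (.atom (S.angle (.and (B.subst φ) (C.subst φ)))) (.atom (S.angle (B.subst φ))) ::
          .imp (.atom (S.angle (.and (B.subst φ) (C.subst φ)))) (.atom (S.angle (C.subst φ))) ::
          (ΥB ++ ΥC), ?_, ?_⟩
      · refine Good.cons ⟨.imp (.single (.atom _)) (.atom _), ⟨⟨_, rfl⟩, ⟨_, rfl⟩⟩, ?_⟩
          (Good.cons ⟨.imp (.single (.atom _)) (.atom _), ⟨⟨_, rfl⟩, ⟨_, rfl⟩⟩, ?_⟩
            (gB.append gC))
        · simp only [Angling.std, Fml.subst, stdAtom_angle]; exact d_proj₁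
        · simp only [Angling.std, Fml.subst, stdAtom_angle]; exact d_proj₂
      · intro Γ hang hm hups
        have hang' : Fml.atom (S.angle (.and (B.subst φ) (C.subst φ))) ∈ Γ := by
          simpa [Fml.subst] using hang
        have hm' : Fml.and (B.subst (fun i => S.tr (φ i))) (C.subst (fun i => S.tr (φ i))) ∈ Γ := by
          simpa [Fml.subst] using hm
        have trB : CKD Γ (some (S.tr (B.subst φ))) := by
          refine d_impL (hups _ (List.mem_cons_self)) (d_id hang') ?_
          refine d_andL₁ (Multiset.mem_cons_of_mem hm') ?_
          exact dB _ (Multiset.mem_cons_of_mem (Multiset.mem_cons_self _ _))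
            (Multiset.mem_cons_self _ _)
            (fun F hF => Multiset.mem_cons_of_mem <| Multiset.mem_cons_of_mem <|
              hups F (by simp [hF]))
        have trC : CKD Γ (some (S.tr (C.subst φ))) := by
          refine d_impL (hups _ (List.mem_cons_of_mem _ (List.mem_cons_self)))
            (d_id hang') ?_
          refine d_andL₂ (Multiset.mem_cons_of_mem hm') ?_
          exact dC _ (Multiset.mem_cons_of_mem (Multiset.mem_cons_self _ _))
            (Multiset.mem_cons_self _ _)
            (fun F hF => Multiset.mem_cons_of_mem <| Multiset.mem_cons_of_mem <|
              hups F (by simp [hF]))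
        simp only [Fml.subst, Angling.tr]
        exact d_andR (d_andR trB trC) (d_id hang')
  | @box C hC ihC =>
      obtain ⟨ΥC, gC, dC⟩ := ihC
      refine ⟨.imp (.atom (S.angle (.box (C.subst φ)))) (.box (.atom (S.angle (C.subst φ)))) ::
          ΥC.map .box, ?_, ?_⟩
      · refine Good.cons ⟨.imp (.single (.atom _)) (.box (.atom _)), ⟨⟨_, rfl⟩, ⟨_, rfl⟩⟩, ?_⟩
          gC.mapBox
        simp only [Angling.std, Fml.subst, stdAtom_angle]
        exact d_imp_id
      · intro Γ hang hm hups
        have hang' : Fml.atom (S.angle (.box (C.subst φ))) ∈ Γ := by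
          simpa [Fml.subst] using hang
        have hm' : Fml.box (C.subst (fun i => S.tr (φ i))) ∈ Γ := by
          simpa [Fml.subst] using hm
        have base := dC (Fml.atom (S.angle (C.subst φ)) ::ₘ C.subst (fun i => S.tr (φ i)) ::ₘ
            (↑ΥC : Multiset (Fml ℕ))) (Multiset.mem_cons_self _ _)
          (Multiset.mem_cons_of_mem (Multiset.mem_cons_self _ _))
          (fun F hF => Multiset.mem_cons_of_mem (Multiset.mem_cons_of_mem (Multiset.mem_coe.2 hF)))
        have k := d_kbox base
        rw [Multiset.map_cons, Multiset.map_cons] at k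
        have hbox : CKD Γ (some (.box (S.tr (C.subst φ)))) := by
          refine d_impL (hups _ (List.mem_cons_self)) (d_id hang') ?_
          refine d_sub k ?_
          intro F hF
          rcases Multiset.mem_cons.1 hF with rfl | hF
          · exact Multiset.mem_cons_self _ _
          · rcases Multiset.mem_cons.1 hF with rfl | hF
            · exact Multiset.mem_cons_of_mem hm'
            · rcases Multiset.mem_map.1 hF with ⟨G, hG, rfl⟩
              exact Multiset.mem_cons_of_mem (hups _ (List.mem_cons_of_mem _
                (List.mem_map_of_mem (Multiset.mem_coe.1 hG))))
        simp only [Fml.subst, Angling.tr]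
        exact d_andR hbox (d_id hang')
  | @imp B C hB hC ihC =>
      obtain ⟨ΥB, gB, dB⟩ := ap_rev S φ hB
      obtain ⟨ΥC, gC, dC⟩ := ihC
      refine ⟨.imp (.and (.atom (S.angle (.imp (B.subst φ) (C.subst φ))))
            (.atom (S.angle (B.subst φ)))) (.atom (S.angle (C.subst φ))) :: (ΥB ++ ΥC), ?_, ?_⟩
      · refine Good.cons ⟨.imp (.and (.single (.atom _)) (.single (.atom _))) (.atom _),
          ⟨⟨⟨_, rfl⟩, ⟨_, rfl⟩⟩, ⟨_, rfl⟩⟩, ?_⟩ (gB.append gC)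
        simp only [Angling.std, Fml.subst, stdAtom_angle]
        exact d_mp_thm
      · intro Γ hang hm hups
        have hang' : Fml.atom (S.angle (.imp (B.subst φ) (C.subst φ))) ∈ Γ := by
          simpa [Fml.subst] using hang
        have hm' : Fml.imp (B.subst (fun i => S.tr (φ i))) (C.subst (fun i => S.tr (φ i))) ∈ Γ := by
          simpa [Fml.subst] using hm
        simp only [Fml.subst, Angling.tr]
        refine d_andR ?_ (d_id hang')
        refine d_impR ?_
        have sB : CKD (S.tr (B.subst φ) ::ₘ Γ) (some (B.subst (fun i => S.tr (φ i)))) :=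
          dB _ (Multiset.mem_cons_self _ _)
            (fun F hF => Multiset.mem_cons_of_mem (hups F (by simp [hF])))
        refine d_cut sB ?_
        refine d_impL (Multiset.mem_cons_of_mem (Multiset.mem_cons_of_mem hm'))
          (d_id (Multiset.mem_cons_self _ _)) ?_
        have hC' : CKD (C.subst (fun i => S.tr (φ i)) ::ₘ B.subst (fun i => S.tr (φ i)) ::ₘ
            S.tr (B.subst φ) ::ₘ Γ) (some (.atom (S.angle (C.subst φ)))) := by
          refine d_impL (P := .and (.atom (S.angle (.imp (B.subst φ) (C.subst φ))))
              (.atom (S.angle (B.subst φ)))) (Q := .atom (S.angle (C.subst φ)))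
            (Multiset.mem_cons_of_mem <| Multiset.mem_cons_of_mem <|
              Multiset.mem_cons_of_mem (hups _ (List.mem_cons_self)))
            (d_andR (d_id (Multiset.mem_cons_of_mem <| Multiset.mem_cons_of_mem <|
                Multiset.mem_cons_of_mem hang'))
              (tr_angle S _ (Multiset.mem_cons_of_mem <| Multiset.mem_cons_of_mem <|
                Multiset.mem_cons_self _ _)))
            (d_id (Multiset.mem_cons_self _ _))
        refine d_cut hC' ?_
        exact dC _ (Multiset.mem_cons_self _ _)
          (Multiset.mem_cons_of_mem (Multiset.mem_cons_self _ _))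
          (fun F hF => Multiset.mem_cons_of_mem <| Multiset.mem_cons_of_mem <|
            Multiset.mem_cons_of_mem <| Multiset.mem_cons_of_mem (hups F (by simp [hF])))

end Main


/-- commutation of the translation `t` with constructive
formulas. -/
theorem statement_7 (S : Angling ℕ) (k : ℕ) (A : Fml (Fin k)) (hA : Constructive A)
    (φ : Fin k → Fml ℕ) :
    ∃ Υ : List (Fml ℕ),
      (∀ F ∈ Υ, ModalHorn F ∧ F.AtomsIn S.Angled) ∧
      Derives (CKSys (fun _ : Fml ℕ => False))
        (Fml.atom (S.angle (A.subst φ)) ::ₘ (A.subst fun i => S.tr (φ i)) ::ₘ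
          (↑Υ : Multiset (Fml ℕ)))
        (some (S.tr (A.subst φ))) ∧
      Derives (CKSys (fun _ : Fml ℕ => False)) 0 (some (conj (Υ.map S.std))) := by
  obtain ⟨Υ, g, d⟩ := con_fwd S φ hA
  refine ⟨Υ, fun F hF => ⟨(g F hF).1, (g F hF).2.1⟩, ?_, ?_⟩
  · refine d _ (Multiset.mem_cons_self _ _)
      (Multiset.mem_cons_of_mem (Multiset.mem_cons_self _ _)) ?_
    intro F hF
    exact Multiset.mem_cons_of_mem (Multiset.mem_cons_of_mem (Multiset.mem_coe.2 hF))
  · refine d_conj ?_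
    intro F hF
    rcases List.mem_map.1 hF with ⟨G, hG, rfl⟩
    exact (g G hG).2.2

end UPT
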